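/- Let σ > 0. Then (sinh(σπ)/π) · ∫₀^π e^{−σω}/cosh(σ(ω − π)) dω = (1 − e^{−2σπ}) · (1 + (1/(2σπ)) · ln((1 + e^{−2σπ})/2)). In particular this quantity tends to 1 as σ → ∞. -/

import Mathlib

open Real Filter

lemma integral_eval (σ : ℝ) (hσ : 0 < σ) :
    ∫ ω in (0:ℝ)..π, Real.exp (-σ * ω) / Real.cosh (σ * (ω - π)) =
      (Real.exp (-(σ*π)) / σ) * (Real.log (1 + Real.exp (2*σ*π)) - Real.log 2) := by
  have hσ' : σ ≠ 0 := ne_of_gt hσ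
  have key : ∀ ω ∈ Set.uIcc (0:ℝ) π,
      HasDerivAt (fun ω => -(Real.exp (-(σ*π))/σ) * Real.log (1 + Real.exp (2*σ*(π-ω))))
        (Real.exp (-σ * ω) / Real.cosh (σ * (ω - π))) ω := by
    intro ω _
    have h1 : HasDerivAt (fun ω : ℝ => 2*σ*(π-ω)) (2*σ*(-1)) ω :=
      ((hasDerivAt_id ω).const_sub π).const_mul (2*σ)
    have h2 := h1.exp
    have h3 := (h2.const_add 1)
    have hpos : (0:ℝ) < 1 + Real.exp (2*σ*(π-ω)) := by positivity
    have h4 := (h3.log (ne_of_gt hpos)).const_mul (-(Real.exp (-(σ*π))/σ))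
    refine h4.congr_deriv (Eq.symm ?_)
    rw [Real.cosh_eq]
    have h5 : Real.exp (σ*(ω-π)) + Real.exp (-(σ*(ω-π))) > 0 := by positivity
    field_simp
    ring_nf
    have f1 : rexp (-(σ*ω*2)+σ*π*2) * (rexp (-(σ*π)) * rexp (σ*ω-σ*π)) = rexp (-(σ*ω)) := by
      rw [← Real.exp_add, ← Real.exp_add]; ring_nf
    have f2 : rexp (-(σ*ω*2)+σ*π*2) * (rexp (-(σ*π)) * rexp (-(σ*ω)+σ*π)) = rexp (-(σ*ω)) * rexp (-(σ*ω*2)+σ*π*2) := by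
      rw [← Real.exp_add, ← Real.exp_add, ← Real.exp_add]; ring_nf
    linear_combination (-1)*f1 + (-1)*f2
  rw [intervalIntegral.integral_eq_sub_of_hasDerivAt key]
  · simp [Real.exp_zero]
    ring
  · apply Continuous.intervalIntegrable
    apply Continuous.div (by continuity) (by continuity)
    intro x
    exact (Real.cosh_pos _).ne'

lemma main_eq (σ : ℝ) (hσ : 0 < σ) :
    (Real.sinh (σ * π) / π *
        ∫ ω in (0 : ℝ)..π, Real.exp (-σ * ω) / Real.cosh (σ * (ω - π))) =
      (1 - Real.exp (-2 * σ * π)) *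
        (1 + 1 / (2 * σ * π) * Real.log ((1 + Real.exp (-2 * σ * π)) / 2)) := by
  have hσ' : σ ≠ 0 := ne_of_gt hσ
  have hπ : (π:ℝ) ≠ 0 := Real.pi_ne_zero
  have g2 : rexp (-(σ*π)) * rexp (-(σ*π)) = rexp (-2*σ*π) := by
    rw [← Real.exp_add]; ring_nf
  have hlog : Real.log (1 + Real.exp (2*σ*π)) =
      2*σ*π + Real.log (1 + Real.exp (-2*σ*π)) := by
    rw [show (1:ℝ) + Real.exp (2*σ*π) = Real.exp (2*σ*π) * (1 + Real.exp (-2*σ*π)) from by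
        rw [mul_add, ← Real.exp_add]; ring_nf; simp; linarith,
      Real.log_mul (Real.exp_ne_zero _) (by positivity), Real.log_exp]
  have hd : Real.log ((1 + Real.exp (-2*σ*π))/2) =
      Real.log (1 + Real.exp (-2*σ*π)) - Real.log 2 :=
    Real.log_div (by positivity) two_ne_zero
  rw [integral_eval σ hσ, hlog, Real.sinh_eq, hd, ← g2, Real.exp_neg]
  field_simp
  ring

/-- For `σ > 0`,
`(sinh(σπ)/π)·∫₀^π e^{−σω}/cosh(σ(ω − π)) dω
  = (1 − e^{−2σπ})·(1 + (1/(2σπ))·ln((1 + e^{−2σπ})/2))`,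
and this quantity tends to `1` as `σ → ∞`. -/
theorem lorentz_I2 (σ : ℝ) (hσ : 0 < σ) :
    (Real.sinh (σ * π) / π *
        ∫ ω in (0 : ℝ)..π, Real.exp (-σ * ω) / Real.cosh (σ * (ω - π))) =
      (1 - Real.exp (-2 * σ * π)) *
        (1 + 1 / (2 * σ * π) * Real.log ((1 + Real.exp (-2 * σ * π)) / 2)) ∧
    Tendsto (fun s : ℝ => Real.sinh (s * π) / π *
        ∫ ω in (0 : ℝ)..π, Real.exp (-s * ω) / Real.cosh (s * (ω - π)))
      atTop (nhds 1) := by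
  refine ⟨main_eq σ hσ, ?_⟩
  have h0 : Tendsto (fun s : ℝ => Real.exp (-2*s*π)) atTop (nhds 0) := by
    apply Real.tendsto_exp_atBot.comp
    have : Tendsto (fun s : ℝ => s * (-2*π)) atTop atBot :=
      Tendsto.atTop_mul_const_of_neg (by nlinarith [Real.pi_pos]) tendsto_id
    exact this.congr (by intro s; ring)
  have h1 : Tendsto (fun s : ℝ => 1/(2*s*π)) atTop (nhds 0) := by
    have ht : Tendsto (fun s : ℝ => 2*s*π) atTop atTop := by
      have := Tendsto.atTop_mul_const (f := fun s : ℝ => s) (mul_pos two_pos Real.pi_pos) tendsto_id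
      exact this.congr (fun s => by ring)
    simpa only [one_div, Function.comp_def] using tendsto_inv_atTop_zero.comp ht
  have h2 : Tendsto (fun s : ℝ => Real.log ((1 + Real.exp (-2*s*π))/2)) atTop
      (nhds (Real.log ((1+0)/2))) := by
    apply (Real.continuousAt_log (by norm_num)).tendsto.comp
    exact ((h0.const_add 1).div_const 2)
  have hlim : Tendsto (fun s : ℝ => (1 - Real.exp (-2*s*π)) *
      (1 + 1/(2*s*π) * Real.log ((1 + Real.exp (-2*s*π))/2))) atTop (nhds 1) := by
    have hmul := Tendsto.mul (Tendsto.sub (tendsto_const_nhds (x := (1:ℝ))) h0)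
      (Tendsto.const_add 1 (h1.mul h2))
    simpa using hmul
  apply hlim.congr'
  filter_upwards [eventually_gt_atTop (0:ℝ)] with s hs
  exact (main_eq s hs).symm
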